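/- Let f(z) = (3√3/2)(1-a^2)(z-a)/(1-az)^3 with 0 < a < 1/√3. Then sup_{|z|<1} (1-|z|^2)|f(z)| = 1. -/

import Mathlib

open Metric

theorem avkhadiev_kayumov_extremal (a : ℝ) (ha0 : 0 < a) (ha : a < 1 / Real.sqrt 3)
    (f : ℂ → ℂ)
    (hf : ∀ z : ℂ, f z = (3 * Real.sqrt 3 / 2) * (1 - a ^ 2) * (z - a) / (1 - a * z) ^ 3) :
    IsLUB ((fun z : ℂ => (1 - ‖z‖ ^ 2) * ‖f z‖) '' ball (0 : ℂ) 1) 1 := by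
  have hs3 : Real.sqrt 3 ^ 2 = 3 := Real.sq_sqrt (by norm_num)
  have hs3pos : 0 < Real.sqrt 3 := Real.sqrt_pos.mpr (by norm_num)
  have ha1 : a < 1 := lt_trans ha (by rw [div_lt_one hs3pos]; nlinarith)
  have ha2 : (0:ℝ) < 1 - a^2 := by nlinarith
  have key : ∀ z : ℂ, ‖1 - (a:ℂ)*z‖^2 - ‖z - (a:ℂ)‖^2 = (1 - a^2)*(1 - ‖z‖^2) := by
    intro z
    simp only [Complex.sq_norm, Complex.normSq_apply, Complex.sub_re,
      Complex.sub_im, Complex.mul_re, Complex.mul_im, Complex.one_re, Complex.one_im,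
      Complex.ofReal_re, Complex.ofReal_im]
    ring
  constructor
  · rintro y ⟨z, hz, rfl⟩
    simp only [mem_ball, dist_zero_right] at hz
    set A := ‖1 - (a:ℂ)*z‖ with hA
    set B := ‖z - (a:ℂ)‖ with hB
    have hBnn : 0 ≤ B := norm_nonneg _
    have hApos : 0 < A := by
      have h1 : ‖(a:ℂ)*z‖ < 1 := by
        rw [norm_mul, Complex.norm_real, Real.norm_eq_abs, abs_of_pos ha0]
        nlinarith [norm_nonneg z]
      have := norm_sub_norm_le (1:ℂ) ((a:ℂ)*z)
      simp only [norm_one] at this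
      linarith
    have hfz : ‖f z‖ = (3*Real.sqrt 3/2*(1-a^2)) * B / A^3 := by
      rw [hf]
      have hc : (3 * (Real.sqrt 3:ℂ) / 2) * (1 - (a:ℂ)^2) * (z - a) / (1 - a*z)^3
          = ((3*Real.sqrt 3/2*(1-a^2) : ℝ) : ℂ) * (z - a) / (1 - a*z)^3 := by
        push_cast; ring
      rw [hc, norm_div, norm_mul, norm_pow, Complex.norm_real, Real.norm_eq_abs,
        abs_of_pos (by positivity)]
    show (1 - ‖z‖^2) * ‖f z‖ ≤ 1
    rw [hfz]
    have hz2 : (1-a^2)*(1-‖z‖^2) = A^2 - B^2 := (key z).symm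
    have h1 : (1-‖z‖^2) * (3*Real.sqrt 3/2*(1-a^2)*B/A^3)
        = (3*Real.sqrt 3/2*((1-a^2)*(1-‖z‖^2))*B)/A^3 := by ring
    simp only [h1, hz2]
    rw [div_le_one (by positivity)]
    have hid : (Real.sqrt 3*B - A)^2*(Real.sqrt 3*B+2*A)
        = 2*A^3 - 3*Real.sqrt 3*A^2*B + 3*Real.sqrt 3*B^3 := by
      linear_combination Real.sqrt 3 * B^3 * hs3
    nlinarith [mul_nonneg (sq_nonneg (Real.sqrt 3*B - A))
      (by positivity : (0:ℝ) ≤ Real.sqrt 3*B+2*A), hid]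
  · intro y hy
    set s := Real.sqrt 3 with hsdef
    set x : ℝ := (1 + s*a)/(s + a) with hxdef
    have hden : 0 < s + a := by positivity
    have hs1 : 1 < s := by nlinarith
    have hx0 : 0 < x := by positivity
    have hx1 : x < 1 := by
      rw [hxdef, div_lt_one hden]; nlinarith
    have hxa : x - a = (1-a^2)/(s+a) := by
      rw [hxdef]; field_simp; ring
    have h1ax : 1 - a*x = s*(1-a^2)/(s+a) := by
      rw [hxdef]; field_simp; ring
    have h1axpos : 0 < 1 - a*x := by rw [h1ax]; positivity
    have hx2 : 1 - x^2 = 2*(1-a^2)/(s+a)^2 := by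
      rw [hxdef]; field_simp; linear_combination (1-a^2)*hs3
    apply hy
    refine ⟨(x:ℂ), ?_, ?_⟩
    · simp only [mem_ball, dist_zero_right, Complex.norm_real, Real.norm_eq_abs]
      rwa [abs_of_pos hx0]
    · have hfx : f (x:ℂ) = ((3*s/2*(1-a^2)*(x-a)/(1-a*x)^3 : ℝ) : ℂ) := by
        rw [hf]; push_cast; ring
      have hrpos : 0 < 3*s/2*(1-a^2)*(x-a)/(1-a*x)^3 := by
        have : 0 < x - a := by rw [hxa]; positivity
        positivity
      show (1 - ‖(x:ℂ)‖^2) * ‖f (x:ℂ)‖ = 1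
      have hcube : (s*(1-a^2)/(s+a))^3 = 3*s*(1-a^2)^3/(s+a)^3 := by
        rw [div_pow, mul_pow, show s^3 = 3*s from by linear_combination s*hs3]
      rw [hfx]
      simp only [Complex.norm_real, Real.norm_eq_abs]
      rw [abs_of_pos hrpos, abs_of_pos hx0, hxa, h1ax, hx2, hcube]
      field_simp
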